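/- Let d ≥ 2. There do not exist unitary matrices W, V ∈ M_d(ℂ) such that for every unitary matrix U ∈ M_d(ℂ) there is a complex number c (depending on U) with W U V = c · U†. -/

import Mathlib

open scoped ComplexOrder Kronecker
open Matrix

noncomputable section

/-- The space of linear maps from `m × m` complex matrices to `n × n` complex matrices. -/
abbrev MatMap (m n : ℕ) := Matrix (Fin m) (Fin m) ℂ →ₗ[ℂ] Matrix (Fin n) (Fin n) ℂ

/-- The Choi matrix `Choi(Q) = Σ_{i,j} Q(E_{ij}) ⊗ E_{ij}` of a linear map between
matrix spaces. -/
def choi {m n : ℕ} (Q : MatMap m n) : Matrix (Fin n × Fin m) (Fin n × Fin m) ℂ :=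
  Matrix.of fun p q => Q (Matrix.single p.2 q.2 1) p.1 q.1

/-- A linear map is completely positive if its Choi matrix is positive semidefinite. -/
def IsCP {m n : ℕ} (Q : MatMap m n) : Prop := (choi Q).PosSemidef

/-- A quantum operation: a completely positive trace-non-increasing linear map. -/
def IsQOp {m n : ℕ} (Q : MatMap m n) : Prop :=
  IsCP Q ∧ ∀ ρ : Matrix (Fin m) (Fin m) ℂ, ρ.PosSemidef → (Q ρ).trace ≤ ρ.trace

/-- A quantum channel: a completely positive trace-preserving linear map. -/
def IsChannel {m n : ℕ} (Q : MatMap m n) : Prop :=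
  IsCP Q ∧ ∀ ρ : Matrix (Fin m) (Fin m) ℂ, (Q ρ).trace = ρ.trace

/-- A density matrix: positive semidefinite with unit trace. -/
def IsDensity {ι : Type*} [Fintype ι] (ρ : Matrix ι ι ℂ) : Prop :=
  ρ.PosSemidef ∧ ρ.trace = 1

/-- A rank-one orthogonal projection `|ψ⟩⟨ψ|` for a unit vector `ψ`. -/
def IsRankOneProj {d : ℕ} (P : Matrix (Fin d) (Fin d) ℂ) : Prop :=
  ∃ ψ : Fin d → ℂ, star ψ ⬝ᵥ ψ = 1 ∧ P = Matrix.vecMulVec ψ (star ψ)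

/-- A state space symmetry: a bijection between the sets of density matrices that
preserves convex combinations. -/
def IsStateSymmetry {ι κ : Type*} [Fintype ι] [Fintype κ]
    (S : Matrix ι ι ℂ → Matrix κ κ ℂ) : Prop :=
  Set.BijOn S {ρ | IsDensity ρ} {ρ | IsDensity ρ} ∧
  ∀ ρ σ : Matrix ι ι ℂ, IsDensity ρ → IsDensity σ → ∀ p : ℝ, 0 ≤ p → p ≤ 1 →
    S ((p : ℂ) • ρ + ((1 - p : ℝ) : ℂ) • σ) = (p : ℂ) • S ρ + ((1 - p : ℝ) : ℂ) • S σ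

/-- An operation space symmetry: a bijection between the sets of quantum operations that
preserves convex combinations and maps the zero map to the zero map. -/
def IsOpSymmetry {m n m' n' : ℕ} (S : MatMap m n → MatMap m' n') : Prop :=
  Set.BijOn S {Q | IsQOp Q} {Q | IsQOp Q} ∧
  (∀ Q R : MatMap m n, IsQOp Q → IsQOp R → ∀ p : ℝ, 0 ≤ p → p ≤ 1 →
    S ((p : ℂ) • Q + ((1 - p : ℝ) : ℂ) • R) = (p : ℂ) • S Q + ((1 - p : ℝ) : ℂ) • S R) ∧
  S 0 = 0

/-- Transport of a square matrix along an equality of dimensions. -/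
def castMat {m n : ℕ} (h : m = n) (A : Matrix (Fin m) (Fin m) ℂ) :
    Matrix (Fin n) (Fin n) ℂ :=
  Matrix.reindex (finCongr h) (finCongr h) A

/-- The unitary channel `ρ ↦ U ρ U†` as a linear map. -/
def adjAction {d : ℕ} (U : Matrix (Fin d) (Fin d) ℂ) : MatMap d d where
  toFun ρ := U * ρ * Uᴴ
  map_add' x y := by simp [Matrix.mul_add, Matrix.add_mul]
  map_smul' c x := by simp [Matrix.mul_smul, Matrix.smul_mul]

/-- The Hilbert–Schmidt adjoint of a linear map between matrix spaces; it is the unique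
linear map satisfying `Tr[A† Q(B)] = Tr[(Q†(A))† B]` for all `A`, `B`. -/
def hsAdjoint {m n : ℕ} (Q : MatMap m n) : MatMap n m where
  toFun A := Matrix.of fun i j => ((Q (Matrix.single i j 1))ᴴ * A).trace
  map_add' A B := by
    ext i j
    simp [Matrix.mul_add, Matrix.trace_add]
  map_smul' c A := by
    ext i j
    simp [Matrix.mul_smul, Matrix.trace_smul]

open scoped Classical in
/-- The positive semidefinite square root (junk value `0` on non-psd inputs). -/
noncomputable def psqrt {d : ℕ} (M : Matrix (Fin d) (Fin d) ℂ) : Matrix (Fin d) (Fin d) ℂ :=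
  if h : M.PosSemidef then
    (h.1.eigenvectorUnitary : Matrix (Fin d) (Fin d) ℂ) *
      Matrix.diagonal ((↑) ∘ (√·) ∘ h.1.eigenvalues) *
      (star h.1.eigenvectorUnitary : Matrix (Fin d) (Fin d) ℂ) else 0

/-- The fidelity `F(ρ,σ) = (Tr[√(√ρ σ √ρ)])²` of two density matrices. -/
noncomputable def fidelity {d : ℕ} (ρ σ : Matrix (Fin d) (Fin d) ℂ) : ℝ :=
  ((psqrt (psqrt ρ * σ * psqrt ρ)).trace.re) ^ 2

/-- The double transpose `ρ ↦ [Φ(ρᵀ)]ᵀ` of a linear map between matrix spaces. -/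
def doubleTransposeMap {m n : ℕ} (Φ : MatMap m n) : MatMap m n where
  toFun ρ := (Φ ρᵀ)ᵀ
  map_add' x y := by simp
  map_smul' c x := by simp

/-- A time symmetric quantum operation: completely positive, with `Q†(I_n) ≤ I_m`
and `Q(I_m/m) ≤ I_n/n` in the Loewner order. -/
def IsTSOp {m n : ℕ} (Q : MatMap m n) : Prop :=
  IsCP Q ∧ ((1 : Matrix (Fin m) (Fin m) ℂ) - hsAdjoint Q 1).PosSemidef ∧
    ((n : ℂ)⁻¹ • (1 : Matrix (Fin n) (Fin n) ℂ)
      - Q ((m : ℂ)⁻¹ • (1 : Matrix (Fin m) (Fin m) ℂ))).PosSemidef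

/-- For `d ≥ 2`, there are no fixed unitaries `W`, `V` with `W U V = c·U†` (for some
phase `c` depending on `U`) for every unitary `U`. -/
theorem no_sandwich_adjoint (d : ℕ) (hd : 2 ≤ d) :
    ¬ ∃ W ∈ Matrix.unitaryGroup (Fin d) ℂ, ∃ V ∈ Matrix.unitaryGroup (Fin d) ℂ,
        ∀ U ∈ Matrix.unitaryGroup (Fin d) ℂ, ∃ c : ℂ, W * U * V = c • Uᴴ := by
  rintro ⟨W, hW, V, hV, h⟩
  set i0 : Fin d := ⟨0, by omega⟩ with hi0
  set i1 : Fin d := ⟨1, by omega⟩ with hi1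
  have hne : i0 ≠ i1 := by simp [hi0, hi1, Fin.ext_iff]
  set a : Fin d → ℂ := fun k => if k = i1 then Complex.I else 1 with ha
  set A : Matrix (Fin d) (Fin d) ℂ := Matrix.diagonal a with hAdef
  set σ : Equiv.Perm (Fin d) := Equiv.swap i0 i1 with hσ
  set B : Matrix (Fin d) (Fin d) ℂ := σ.permMatrix ℂ with hBdef
  have hBapply : ∀ i j, B i j = if σ i = j then 1 else 0 := by
    intro i j
    rw [hBdef, Equiv.Perm.permMatrix, PEquiv.toMatrix_toPEquiv_eq, Matrix.submatrix_apply, id_eq, Matrix.one_apply]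
  -- A is unitary
  have hA : A ∈ Matrix.unitaryGroup (Fin d) ℂ := by
    rw [Matrix.mem_unitaryGroup_iff']
    show Aᴴ * A = 1
    rw [hAdef, Matrix.diagonal_conjTranspose, Matrix.diagonal_mul_diagonal]
    have hfun : star a * a = 1 := by
      funext k
      simp only [Pi.mul_apply, Pi.star_apply, Pi.one_apply]
      by_cases hk : k = i1 <;>
        simp [ha, hk, Complex.star_def, Complex.conj_I, Complex.I_mul_I]
    simp only [Pi.star_apply] at hfun ⊢
    have h2 : (fun i => star (a i) * a i) = fun _ => (1 : ℂ) := by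
      funext k; exact congrFun hfun k
    rw [h2, Matrix.diagonal_one]
  -- B is unitary
  have hBstar : star B = B := by
    ext i j
    show star (B j i) = B i j
    rw [hBapply, hBapply]
    have : σ j = i ↔ σ i = j := by
      constructor <;> intro hh <;> rw [← hh, hσ, Equiv.swap_apply_self]
    simp only [this]
    split_ifs <;> simp
  have hBB : B * B = 1 := by
    rw [hBdef, Equiv.Perm.permMatrix, ← PEquiv.toMatrix_trans, ← Equiv.toPEquiv_trans]
    rw [hσ, Equiv.swap_swap, Equiv.toPEquiv_refl, PEquiv.toMatrix_refl]
  have hB : B ∈ Matrix.unitaryGroup (Fin d) ℂ := by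
    rw [Matrix.mem_unitaryGroup_iff', hBstar]; exact hBB
  -- the unitaries we feed in
  have hU1 : Aᴴ ∈ Matrix.unitaryGroup (Fin d) ℂ := Unitary.star_mem hA
  have hU2 : Bᴴ ∈ Matrix.unitaryGroup (Fin d) ℂ := Unitary.star_mem hB
  have hU12 : Aᴴ * Bᴴ ∈ Matrix.unitaryGroup (Fin d) ℂ := mul_mem hU1 hU2
  obtain ⟨c0, hc0⟩ := h 1 (one_mem _)
  obtain ⟨c1, hc1⟩ := h Aᴴ hU1
  obtain ⟨c2, hc2⟩ := h Bᴴ hU2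
  obtain ⟨c3, hc3⟩ := h (Aᴴ * Bᴴ) hU12
  rw [Matrix.conjTranspose_conjTranspose] at hc1 hc2
  have hc3' : W * (Aᴴ * Bᴴ) * V = c3 • (B * A) := by
    rw [hc3, Matrix.conjTranspose_mul, Matrix.conjTranspose_conjTranspose,
      Matrix.conjTranspose_conjTranspose]
  -- middle factor
  have hWV : W * V = c0 • 1 := by
    have := hc0; rwa [mul_one, Matrix.conjTranspose_one] at this
  have hmid : star V * star W = (starRingEnd ℂ) c0 • 1 := by
    have : star (W * V) = star ((c0 : ℂ) • (1 : Matrix (Fin d) (Fin d) ℂ)) := by rw [hWV]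
    rwa [Matrix.star_mul, star_smul, star_one, Complex.star_def] at this
  -- cancellation identities
  have hWW : star W * W = 1 := Matrix.mem_unitaryGroup_iff'.mp hW
  have hVV : V * star V = 1 := Matrix.mem_unitaryGroup_iff.mp hV
  have key : W * (Aᴴ * Bᴴ) * V
      = (W * Aᴴ * V) * (star V * star W) * (W * Bᴴ * V) := by
    have h' : (W * Aᴴ * V) * (star V * star W) * (W * Bᴴ * V)
        = W * (Aᴴ * ((V * star V) * ((star W * W) * (Bᴴ * V)))) := by
      simp only [mul_assoc]
    rw [h', hVV, hWW, one_mul, one_mul]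
    simp only [mul_assoc]
  have main : c3 • (B * A) = (c1 * (starRingEnd ℂ) c0 * c2) • (A * B) := by
    rw [← hc3', key, hc1, hc2, hmid]
    simp only [Matrix.smul_mul, Matrix.mul_smul, Matrix.mul_one, smul_smul]
    congr 1
    ring
  set e : ℂ := c1 * (starRingEnd ℂ) c0 * c2 with he
  -- entry computations
  have hB01 : B i0 i1 = 1 := by rw [hBapply]; simp [hσ]
  have hB10 : B i1 i0 = 1 := by rw [hBapply]; simp [hσ]
  have ha0 : a i0 = 1 := by simp [ha, hne]
  have ha1 : a i1 = Complex.I := by simp [ha]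
  have e01 := congrFun (congrFun (congrArg (fun M => (M : Matrix (Fin d) (Fin d) ℂ)) main) i0) i1
  have e10 := congrFun (congrFun (congrArg (fun M => (M : Matrix (Fin d) (Fin d) ℂ)) main) i1) i0
  simp only [Matrix.smul_apply, smul_eq_mul] at e01 e10
  rw [hAdef] at e01 e10
  rw [Matrix.mul_diagonal, Matrix.diagonal_mul] at e01 e10
  rw [hB01, ha0, ha1] at e01
  rw [hB10, ha0, ha1] at e10
  -- e01 : c3 * (1 * I) = e * (1 * 1),  e10 : c3 * (1 * 1) = e * (I * 1)
  have hc3zero : c3 = 0 := by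
    have h1 : c3 * Complex.I = e := by linear_combination e01
    have h2 : c3 = e * Complex.I := by linear_combination e10
    linear_combination (1 / 2 : ℂ) * h2 - (Complex.I / 2) * h1 + (c3 / 2) * Complex.I_sq
  -- contradiction: a unitary matrix is nonzero
  have hX : W * (Aᴴ * Bᴴ) * V ∈ Matrix.unitaryGroup (Fin d) ℂ :=
    mul_mem (mul_mem hW hU12) hV
  have hzero : W * (Aᴴ * Bᴴ) * V = 0 := by rw [hc3', hc3zero, zero_smul]
  have hone : (1 : Matrix (Fin d) (Fin d) ℂ) = 0 := by
    have := Matrix.mem_unitaryGroup_iff'.mp hX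
    rw [hzero, star_zero, mul_zero] at this
    exact this.symm
  have := congrFun (congrFun (congrArg (fun M => (M : Matrix (Fin d) (Fin d) ℂ)) hone) i0) i0
  simp [Matrix.one_apply_eq] at this
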